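/- arXiv:1009.0358 — 3 statements merged into one kernel-verified Lean document; each statement's English description precedes it below -/
import Mathlib

section
/- Let H be a trigraph in which every vertex of X ⊆ V(H) has a strong loop and no vertex of Y ⊆ V(H) has any loop (weak or strong). If a digraph G admits both a homomorphism to the induced subtrigraph H[X] and a homomorphism to the induced subtrigraph H[Y], then |V(G)| ≤ |X| · |Y|. -/
structure Trigraph (V : Type*) where
  W : V → V → Prop
  S : V → V → Prop
  disj : ∀ x y, ¬ (W x y ∧ S x y)

def Trigraph.Edge {V : Type*} (H : Trigraph V) (x y : V) : Prop := H.W x y ∨ H.S x y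

def IsTriHom {U V : Type*} (E : U → U → Prop) (H : Trigraph V) (f : U → V) : Prop :=
  ∀ u v, u ≠ v → (E u v → H.Edge (f u) (f v)) ∧ (¬ E u v → ¬ H.S (f u) (f v))

/-- if every vertex of `X` has a strong loop, no vertex of `Y` has any
loop, and `G` admits homomorphisms both to `H[X]` and to `H[Y]`, then
`|V(G)| ≤ |X| ⬝ |Y|`. -/
theorem card_le_of_hom_sparse_dense
    {U V : Type*} [Fintype U] (E : U → U → Prop) (H : Trigraph V)
    (X Y : Finset V)
    (hX : ∀ x ∈ X, H.S x x)
    (hY : ∀ y ∈ Y, ¬ H.W y y ∧ ¬ H.S y y)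
    (g : U → V) (hg : IsTriHom E H g) (hgX : ∀ u, g u ∈ X)
    (h : U → V) (hh : IsTriHom E H h) (hhY : ∀ u, h u ∈ Y) :
    Fintype.card U ≤ X.card * Y.card := by
  classical
  have hinj : Function.Injective (fun u => (g u, h u)) := by
    intro u v huv
    by_contra hne
    simp only [Prod.mk.injEq] at huv
    obtain ⟨hgu, hhu⟩ := huv
    have hS : H.S (g u) (g v) := hgu ▸ hX (g u) (hgX u)
    have hE : E u v := by
      by_contra hnE
      exact (hg u v hne).2 hnE hS
    have hEdge := (hh u v hne).1 hE
    rw [← hhu] at hEdge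
    rcases hEdge with hw | hs
    · exact (hY (h u) (hhY u)).1 hw
    · exact (hY (h u) (hhY u)).2 hs
  calc Fintype.card U ≤ Fintype.card (X ×ˢ Y : Finset (V × V)) := by
        apply Fintype.card_le_of_injective (fun u => ⟨(g u, h u), by
          simp [Finset.mem_product, hgX u, hhY u]⟩)
        intro a b hab
        exact hinj (congrArg Subtype.val hab)
    _ = X.card * Y.card := by simp [Finset.card_product]
end

section
/- Let G' be a minimal chordal completion of a graph G, and let C be a clique of G. Then there are no edges in G' between vertices lying in different connected components of G − C. -/
/-- A graph is chordal if every (injective) cycle of length at least 4 has a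
chord, i.e. there is no induced cycle of length four or more. -/
def IsChordal {V : Type*} (G : SimpleGraph V) : Prop :=
  ∀ (n : ℕ) (f : ZMod n → V), 4 ≤ n → Function.Injective f →
    (∀ i, G.Adj (f i) (f (i + 1))) →
    ∃ i j : ZMod n, j ≠ i + 1 ∧ i ≠ j + 1 ∧ i ≠ j ∧ G.Adj (f i) (f j)

/-- in a minimal chordal completion `G'` of `G`, there are no
edges between vertices of different connected components of `G - C`,
for any clique `C` of `G`. -/
theorem minimal_chordal_completion_no_edges_between_components
    {V : Type*} (G G' : SimpleGraph V)
    (hle : G ≤ G') (hch : IsChordal G')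
    (hmin : ∀ G'' : SimpleGraph V, G ≤ G'' → IsChordal G'' → G'' ≤ G' → G'' = G')
    (C : Set V) (hC : G.IsClique C) :
    ∀ u v : V, u ∉ C → v ∉ C →
      ¬ Relation.ReflTransGen (fun a b => a ∉ C ∧ b ∉ C ∧ G.Adj a b) u v →
      ¬ G'.Adj u v := by
  intro u v hu hv hreach hadj
  set R : V → V → Prop := fun a b => a ∉ C ∧ b ∉ C ∧ G.Adj a b with hR
  have hRsymm : Symmetric R := fun a b ⟨ha, hb, h⟩ => ⟨hb, ha, h.symm⟩
  set S : V → V → Prop := Relation.ReflTransGen R with hS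
  have hSsymm : Symmetric S := fun a b h => by
    haveI : Std.Symm R := ⟨fun x y hxy => hRsymm hxy⟩
    exact Relation.ReflTransGen.symmetric.symm a b h
  let G'' : SimpleGraph V :=
    { Adj := fun a b => G'.Adj a b ∧ (a ∈ C ∨ b ∈ C ∨ S a b)
      symm := by
        constructor
        rintro a b ⟨h1, h2⟩
        refine ⟨h1.symm, ?_⟩
        rcases h2 with h | h | h
        · exact Or.inr (Or.inl h)
        · exact Or.inl h
        · exact Or.inr (Or.inr (hSsymm h))
      loopless := ⟨fun a h => G'.loopless.irrefl a h.1⟩ }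
  have hle1 : G ≤ G'' := by
    intro a b hab
    refine ⟨hle hab, ?_⟩
    by_cases ha : a ∈ C
    · exact Or.inl ha
    by_cases hb : b ∈ C
    · exact Or.inr (Or.inl hb)
    exact Or.inr (Or.inr (Relation.ReflTransGen.single ⟨ha, hb, hab⟩))
  have hle2 : G'' ≤ G' := fun a b hab => hab.1
  have hch'' : IsChordal G'' := by
    intro n f hn hinj hcyc
    haveI : NeZero n := ⟨by omega⟩
    by_cases hall : ∀ i j : ZMod n, f i ∉ C → f j ∉ C → S (f i) (f j)
    · obtain ⟨i, j, h1, h2, h3, hadj'⟩ := hch n f hn hinj (fun i => (hcyc i).1)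
      refine ⟨i, j, h1, h2, h3, hadj', ?_⟩
      by_cases hi : f i ∈ C
      · exact Or.inl hi
      by_cases hj : f j ∈ C
      · exact Or.inr (Or.inl hj)
      exact Or.inr (Or.inr (hall i j hi hj))
    · push_neg at hall
      obtain ⟨i0, j0, hi0, hj0, hns⟩ := hall
      have step : ∀ i : ZMod n, f i ∉ C → f (i + 1) ∉ C → S (f i) (f (i + 1)) := by
        intro i h1 h2
        rcases (hcyc i).2 with h | h | h
        · exact absurd h h1
        · exact absurd h h2
        · exact h
      have chain : ∀ (i : ZMod n) (t : ℕ), f i ∉ C →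
          (∀ m : ℕ, 0 < m → m ≤ t → f (i + (m : ZMod n)) ∉ C) → S (f i) (f (i + (t : ZMod n))) := by
        intro i t
        induction t with
        | zero => intro _ _; simp only [Nat.cast_zero, add_zero]; exact Relation.ReflTransGen.refl
        | succ t ih =>
          intro h0 hm
          have hprev : S (f i) (f (i + (t : ZMod n))) :=
            ih h0 (fun m hm1 hm2 => hm m hm1 (hm2.trans (Nat.le_succ t)))
          have h1 : f (i + (t : ZMod n)) ∉ C := by
            cases t with
            | zero => simpa using h0
            | succ t' => exact hm _ (Nat.succ_pos _) (Nat.le_succ _)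
          have h2 : f (i + ((t + 1 : ℕ) : ZMod n)) ∉ C := hm _ (Nat.succ_pos _) le_rfl
          have heq : i + (t : ZMod n) + 1 = i + ((t + 1 : ℕ) : ZMod n) := by push_cast; ring
          have := step (i + (t : ZMod n)) h1 (by rw [heq]; exact h2)
          rw [heq] at this
          exact hprev.trans this
      have hne0 : i0 ≠ j0 := by
        rintro rfl; exact hns Relation.ReflTransGen.refl
      set k : ℕ := (j0 - i0).val with hk
      have hkpos : 0 < k := by
        rcases Nat.eq_zero_or_pos k with h | h
        · exfalso; apply hne0
          have : j0 - i0 = 0 := (ZMod.val_eq_zero _).mp h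
          have := sub_eq_zero.mp this
          exact this.symm
        · exact h
      have hkn : k < n := ZMod.val_lt _
      have hkcast : i0 + (k : ZMod n) = j0 := by
        rw [hk, ZMod.natCast_val, ZMod.cast_id]; ring
      -- C-vertex on the arc from i0 to j0
      have ha : ∃ a : ℕ, 0 < a ∧ a < k ∧ f (i0 + (a : ZMod n)) ∈ C := by
        by_contra hna
        push_neg at hna
        apply hns
        have := chain i0 k hi0 ?_
        · rwa [hkcast] at this
        intro m hm1 hm2
        rcases lt_or_eq_of_le hm2 with h | h
        · exact hna m hm1 h
        · subst h; rwa [hkcast]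
      -- C-vertex on the arc from j0 back to i0
      have hb : ∃ b : ℕ, k < b ∧ b < n ∧ f (i0 + (b : ZMod n)) ∈ C := by
        by_contra hnb
        push_neg at hnb
        apply hns
        apply hSsymm
        have hcast2 : j0 + ((n - k : ℕ) : ZMod n) = i0 := by
          rw [← hkcast]
          rw [add_assoc, ← Nat.cast_add, Nat.add_sub_cancel' hkn.le, ZMod.natCast_self, add_zero]
        have := chain j0 (n - k) hj0 ?_
        · rwa [hcast2] at this
        intro m hm1 hm2
        have hj0m : j0 + (m : ZMod n) = i0 + ((k + m : ℕ) : ZMod n) := by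
          rw [← hkcast]; push_cast; ring
        rw [hj0m]
        rcases lt_or_eq_of_le (by omega : k + m ≤ n) with h | h
        · exact hnb (k + m) (by omega) h
        · rw [h, ZMod.natCast_self, add_zero]; exact hi0
      obtain ⟨a, ha1, ha2, haC⟩ := ha
      obtain ⟨b, hb1, hb2, hbC⟩ := hb
      refine ⟨i0 + (a : ZMod n), i0 + (b : ZMod n), ?_, ?_, ?_, ?_⟩
      · -- j ≠ i + 1
        intro h
        have h' : i0 + (b : ZMod n) = i0 + ((a + 1 : ℕ) : ZMod n) := by
          rw [h]; push_cast; ring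
        have : (b : ZMod n) = ((a + 1 : ℕ) : ZMod n) := add_left_cancel h'
        have := congrArg ZMod.val this
        rw [ZMod.val_cast_of_lt hb2, ZMod.val_cast_of_lt (by omega : a + 1 < n)] at this
        omega
      · -- i ≠ j + 1
        intro h
        have h' : i0 + (a : ZMod n) = i0 + ((b + 1 : ℕ) : ZMod n) := by
          rw [h]; push_cast; ring
        have heq2 : (a : ZMod n) = ((b + 1 : ℕ) : ZMod n) := add_left_cancel h'
        rcases lt_or_eq_of_le (by omega : b + 1 ≤ n) with hbn | hbn
        · have := congrArg ZMod.val heq2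
          rw [ZMod.val_cast_of_lt (by omega : a < n), ZMod.val_cast_of_lt hbn] at this
          omega
        · rw [hbn, ZMod.natCast_self] at heq2
          have := congrArg ZMod.val heq2
          rw [ZMod.val_cast_of_lt (by omega : a < n)] at this
          simp at this
          omega
      · -- i ≠ j
        intro h
        have : (a : ZMod n) = (b : ZMod n) := add_left_cancel h
        have := congrArg ZMod.val this
        rw [ZMod.val_cast_of_lt (by omega : a < n), ZMod.val_cast_of_lt hb2] at this
        omega
      · -- adjacency
        have hnefij : f (i0 + (a : ZMod n)) ≠ f (i0 + (b : ZMod n)) := by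
          intro h
          have := hinj h
          have : (a : ZMod n) = (b : ZMod n) := add_left_cancel this
          have := congrArg ZMod.val this
          rw [ZMod.val_cast_of_lt (by omega : a < n), ZMod.val_cast_of_lt hb2] at this
          omega
        exact ⟨hle (hC haC hbC hnefij), Or.inl haC⟩
  have heq := hmin G'' hle1 hch'' hle2
  rw [← heq] at hadj
  rcases hadj.2 with h | h | h
  · exact hu h
  · exact hv h
  · exact hreach h
end

section
/- Let H be a trigraph, G a digraph with lists L that are arc-consistent and contain representatives. Let x, y be vertices of H such that y weakly dominates x. Suppose t is a vertex of H with xt ∈ S(H), yt not an edge of H, and t appears on some list. Then no list L(u) contains both x and y. -/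
def ArcConsistent {U V : Type*} (E : U → U → Prop) (H : Trigraph V)
    (L : U → Set V) : Prop :=
  ∀ u v, u ≠ v → ∀ x ∈ L u, ∃ y ∈ L v,
    (E u v → H.Edge x y) ∧ (E v u → H.Edge y x) ∧
    (¬ E u v → ¬ H.S x y) ∧ (¬ E v u → ¬ H.S y x)

/-- Lists contain representatives: all lists live in a set `X ⊆ V(H)` and each
element of `X` is the full list of some vertex of `G`. -/
def ContainsRepresentatives {U V : Type*} (L : U → Set V) : Prop :=
  ∃ X : Set V, (∀ u, L u ⊆ X) ∧ ∀ x ∈ X, ∃ v, L v = {x}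

def WeaklyDominates {V : Type*} (H : Trigraph V) (y x : V) : Prop :=
  ∀ z, (H.W z x → H.W z y) ∧ (H.W x z → H.W y z)

/-- with arc-consistent lists containing representatives, if `y`
weakly dominates `x`, `xt` is a strong edge, `yt` is not an edge, and `t`
appears on some list, then no list contains both `x` and `y`. -/
theorem no_list_contains_both
    {U V : Type*} (E : U → U → Prop) (H : Trigraph V) (L : U → Set V)
    (hac : ArcConsistent E H L) (hrep : ContainsRepresentatives L)
    (x y : V) (hdom : WeaklyDominates H y x)
    (t : V) (hst : H.S x t) (hyt : ¬ H.Edge y t) (ht : ∃ w, t ∈ L w) :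
    ∀ u, ¬ (x ∈ L u ∧ y ∈ L u) := by
  rintro u ⟨hx, hy⟩
  obtain ⟨X, hLX, hX⟩ := hrep
  obtain ⟨w, htw⟩ := ht
  obtain ⟨v, hv⟩ := hX t (hLX w htw)
  by_cases huv : u = v
  · subst huv
    rw [hv] at hx hy
    rw [Set.mem_singleton_iff] at hx hy
    subst hx; subst hy
    exact hyt (Or.inr hst)
  · obtain ⟨b, hb, hEx, _, hNx, _⟩ := hac u v huv x hx
    rw [hv, Set.mem_singleton_iff] at hb; subst hb
    have hE : E u v := by
      by_contra h
      exact hNx h hst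
    obtain ⟨b', hb', hEy, _, _, _⟩ := hac u v huv y hy
    rw [hv, Set.mem_singleton_iff] at hb'; subst hb'
    exact hyt (hEy hE)
end
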